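/- Let (X,d) be a compact metric space and f : X → X a homeomorphism with the specification property. If X is not a singleton, then the topological entropy of f is positive: h(f) > 0. -/

import Mathlib

open Filter Set Metric

namespace Paper

variable {X : Type*}

/-- Integer iteration of a homeomorphism: `f^n` for `n : ℤ`. -/
def zIter [TopologicalSpace X] (f : X ≃ₜ X) (n : ℤ) (x : X) : X :=
  if 0 ≤ n then (⇑f)^[n.toNat] x else (⇑f.symm)^[(-n).toNat] x

/-- `(X,f)` is minimal: every (two-sided) orbit is dense. -/
def Minimal [TopologicalSpace X] (f : X ≃ₜ X) : Prop :=
  ∀ x : X, Dense (Set.range fun n : ℤ => zIter f n x)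

/-- Topological transitivity. -/
def TopTransitive [TopologicalSpace X] (f : X ≃ₜ X) : Prop :=
  ∀ U V : Set X, IsOpen U → IsOpen V → U.Nonempty → V.Nonempty →
    ∃ n : ℤ, (U ∩ (zIter f n) ⁻¹' V).Nonempty

/-- Equicontinuity of the family of forward iterates. -/
def EquicontinuousSystem [MetricSpace X] (f : X → X) : Prop :=
  ∀ ε : ℝ, 0 < ε → ∃ δ : ℝ, 0 < δ ∧
    ∀ x y : X, dist x y < δ → ∀ n : ℕ, dist (f^[n] x) (f^[n] y) < ε

/-- The transition times `s_j` (0-indexed: `s 0 = 0`,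
`s (j+1) = s j + m_j + t_j - 1`) for an orbit sequence `C` (with lengths `m_j = (C j).2`)
and a gap `g`. -/
def sTimes (C : ℕ → X × ℕ) (g : ℕ → ℕ) : ℕ → ℕ
  | 0 => 0
  | j + 1 => sTimes C g j + (C j).2 + g j - 1

/-- `(C, g)` (an orbit sequence of rank `k` together with a gap) is `ε`-shadowed by `z`. -/
def Shadows [MetricSpace X] (f : X → X) (k : ℕ) (C : ℕ → X × ℕ) (g : ℕ → ℕ)
    (ε : ℝ) (z : X) : Prop :=
  ∀ j < k, ∀ l < (C j).2, dist (f^[sTimes C g j + l] z) (f^[l] (C j).1) < ε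

/-- The gluing orbit property. -/
def GluingOrbit [MetricSpace X] (f : X → X) : Prop :=
  ∀ ε : ℝ, 0 < ε → ∃ M : ℕ, 0 < M ∧
    ∀ k : ℕ, 0 < k → ∀ C : ℕ → X × ℕ, (∀ j < k, 0 < (C j).2) →
      ∃ g : ℕ → ℕ, (∀ j < k - 1, 0 < g j ∧ g j ≤ M) ∧
        ∃ z : X, Shadows f k C g ε z

/-- The specification property, at scale `ε` with constant `M`. -/
def SpecWith [MetricSpace X] (f : X → X) (ε : ℝ) (M : ℕ) : Prop :=
  ∀ k : ℕ, 0 < k → ∀ C : ℕ → X × ℕ, (∀ j < k, 0 < (C j).2) →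
    ∀ g : ℕ → ℕ, (∀ j < k - 1, M ≤ g j) →
      ∃ z : X, Shadows f k C g ε z

/-- The specification property. -/
def Specification [MetricSpace X] (f : X → X) : Prop :=
  ∀ ε : ℝ, 0 < ε → ∃ M : ℕ, 0 < M ∧ SpecWith f ε M

/-- The periodic gluing orbit property. -/
def PerGluingOrbit [MetricSpace X] (f : X → X) : Prop :=
  ∀ ε : ℝ, 0 < ε → ∃ M : ℕ, 0 < M ∧
    ∀ k : ℕ, 0 < k → ∀ C : ℕ → X × ℕ, (∀ j < k, 0 < (C j).2) →
      ∃ t : ℕ, 0 < t ∧ t ≤ M ∧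
        ∃ g : ℕ → ℕ, (∀ j < k - 1, 0 < g j ∧ g j ≤ M) ∧
          ∃ z : X, Shadows f k C g ε z ∧
            f^[sTimes C g (k - 1) + (C (k - 1)).2 + t] z = z

/-- `E` is an `(n,ε)`-separated set. -/
def IsSepSet [MetricSpace X] (f : X → X) (n : ℕ) (ε : ℝ) (E : Set X) : Prop :=
  ∀ x ∈ E, ∀ y ∈ E, x ≠ y → ∃ k < n, ε < dist (f^[k] x) (f^[k] y)

/-- `s(n,ε)`: the maximal cardinality of an `(n,ε)`-separated subset of `X`. -/
noncomputable def sepNum [MetricSpace X] (f : X → X) (n : ℕ) (ε : ℝ) : ℕ :=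
  sSup {N : ℕ | ∃ E : Finset X, IsSepSet f n ε ↑E ∧ E.card = N}

/-- Topological entropy `h(f) = lim_{ε → 0⁺} limsup_n (ln s(n,ε))/n`; since the inner
quantity is monotone as `ε` decreases, the limit equals the supremum over `ε > 0`. -/
noncomputable def topEnt [MetricSpace X] (f : X → X) : EReal :=
  ⨆ (ε : ℝ) (_ : 0 < ε),
    Filter.limsup (fun n : ℕ => ((Real.log (sepNum f n ε) / n : ℝ) : EReal)) Filter.atTop

/-- The set of periodic points of period at most `n`. -/
def perPts (f : X → X) (n : ℕ) : Set X :=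
  {x | ∃ m : ℕ, 0 < m ∧ m ≤ n ∧ f^[m] x = x}

open Classical in
/-- `p(f) = limsup_n (ln p_n(f))/n`, the exponential growth rate of periodic points
(`⊤` contributions when there are infinitely many such points). -/
noncomputable def perGrowth (f : X → X) : EReal :=
  Filter.limsup (fun n : ℕ =>
      if h : (perPts f n).Finite then ((Real.log (perPts f n).ncard / n : ℝ) : EReal) else ⊤)
    Filter.atTop

/-- The lower box dimension of `X`, `liminf_{ε→0⁺} ln s(1,ε) / (-ln ε)`. -/
noncomputable def lowerBoxDim [MetricSpace X] (f : X → X) : EReal :=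
  Filter.liminf (fun ε : ℝ => ((Real.log (sepNum f 1 ε) / (-Real.log ε) : ℝ) : EReal))
    (nhdsWithin 0 (Set.Ioi 0))



































/-! Semiflow case -/

/-- `φ` is a continuous semiflow on `X` (for nonnegative times). -/
def IsSemiflow [TopologicalSpace X] (φ : ℝ → X → X) : Prop :=
  (∀ x : X, φ 0 x = x) ∧
    (∀ s t : ℝ, 0 ≤ s → 0 ≤ t → ∀ x : X, φ (s + t) x = φ s (φ t x)) ∧
      Continuous fun p : ℝ × X => φ p.1 p.2

/-- Minimality of a semiflow: every forward orbit is dense. -/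
def MinimalFlow [TopologicalSpace X] (φ : ℝ → X → X) : Prop :=
  ∀ x : X, Dense {y : X | ∃ t : ℝ, 0 ≤ t ∧ φ t x = y}

/-- Transition times for the semiflow gluing: `s 0 = 0`, `s (j+1) = s j + m_j + t_j`. -/
def sFlow (C : ℕ → X × ℝ) (g : ℕ → ℝ) : ℕ → ℝ
  | 0 => 0
  | j + 1 => sFlow C g j + (C j).2 + g j

/-- Gluing orbit property for a semiflow. -/
def GluingFlow [MetricSpace X] (φ : ℝ → X → X) : Prop :=
  ∀ ε : ℝ, 0 < ε → ∃ M : ℝ, 0 < M ∧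
    ∀ k : ℕ, 0 < k → ∀ C : ℕ → X × ℝ, (∀ j < k, 0 ≤ (C j).2) →
      ∃ g : ℕ → ℝ, (∀ j < k - 1, 0 ≤ g j ∧ g j ≤ M) ∧
        ∃ z : X, ∀ j < k, ∀ t ∈ Set.Icc (0 : ℝ) (C j).2,
          dist (φ (sFlow C g j + t) z) (φ t (C j).1) < ε

/-- `E` is a `(T,ε)`-separated set for the semiflow `φ`. -/
def IsSepFlow [MetricSpace X] (φ : ℝ → X → X) (T ε : ℝ) (E : Set X) : Prop :=
  ∀ x ∈ E, ∀ y ∈ E, x ≠ y → ∃ t ∈ Set.Icc (0 : ℝ) T, ε < dist (φ t x) (φ t y)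

/-- `s(T,ε)` for the semiflow. -/
noncomputable def sepFlow [MetricSpace X] (φ : ℝ → X → X) (T ε : ℝ) : ℕ :=
  sSup {N : ℕ | ∃ E : Finset X, IsSepFlow φ T ε ↑E ∧ E.card = N}

/-- Topological entropy of a semiflow. -/
noncomputable def topEntFlow [MetricSpace X] (φ : ℝ → X → X) : EReal :=
  ⨆ (ε : ℝ) (_ : 0 < ε),
    Filter.limsup (fun T : ℝ => ((Real.log (sepFlow φ T ε) / T : ℝ) : EReal)) Filter.atTop


lemma sTimes_const {X : Type*} (C : ℕ → X × ℕ) (g : ℕ → ℕ) (M : ℕ)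
    (hC : ∀ j, (C j).2 = 1) (hg : ∀ j, g j = M) : ∀ j, sTimes C g j = j * M := by
  intro j
  induction j with
  | zero => simp [sTimes]
  | succ j ih =>
    have : (j + 1) * M = j * M + M := by ring
    rw [sTimes, ih, hC, hg, this]
    omega

lemma sep_bdd [MetricSpace X] [CompactSpace X] (f : X → X) (n : ℕ) {ε : ℝ} (hε : 0 < ε) :
    BddAbove {N : ℕ | ∃ E : Finset X, IsSepSet f n ε ↑E ∧ E.card = N} := by
  classical
  obtain ⟨t, -, htf, hcov⟩ :=
    finite_cover_balls_of_compact (isCompact_univ (X := X)) (show (0:ℝ) < ε/2 by linarith)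
  have hc : ∀ x : X, ∃ c ∈ t, x ∈ ball c (ε/2) := by
    intro x
    simpa using hcov (mem_univ x)
  choose c hct hcb using hc
  haveI : Fintype ↥t := htf.fintype
  refine ⟨Fintype.card (Fin n → ↥t), fun N hN => ?_⟩
  obtain ⟨E, hE, rfl⟩ := hN
  have hinj : Set.InjOn (fun x : X => fun k : Fin n => (⟨c (f^[(k:ℕ)] x), hct _⟩ : ↥t)) ↑E := by
    intro x hx y hy hxy
    by_contra hne
    obtain ⟨k, hk, hd⟩ := hE x hx y hy hne
    have hek : c (f^[k] x) = c (f^[k] y) := by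
      have := congrFun hxy ⟨k, hk⟩
      simpa using this
    have h1 : dist (f^[k] x) (c (f^[k] x)) < ε/2 := mem_ball.mp (hcb _)
    have h2 : dist (f^[k] y) (c (f^[k] y)) < ε/2 := mem_ball.mp (hcb _)
    have := dist_triangle_right (f^[k] x) (f^[k] y) (c (f^[k] x))
    rw [hek] at h1 this
    linarith [h1, h2, this]
  calc E.card ≤ (Finset.univ : Finset (Fin n → ↥t)).card :=
        Finset.card_le_card_of_injOn _ (fun a _ => Finset.mem_univ _) hinj
    _ = Fintype.card (Fin n → ↥t) := Finset.card_univ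

theorem stmt5 [MetricSpace X] [CompactSpace X] [Nontrivial X] (f : X ≃ₜ X)
    (hspec : Specification (⇑f)) :
    0 < topEnt (⇑f) := by
  classical
  obtain ⟨a, b, hab⟩ := exists_pair_ne X
  have hdab : 0 < dist a b := dist_pos.mpr hab
  set ε : ℝ := dist a b / 4 with hε_def
  have hε : 0 < ε := by positivity
  obtain ⟨M, hM, hspecM⟩ := hspec ε hε
  have hsepnum : ∀ n : ℕ, 0 < n → (2:ℕ)^n ≤ sepNum (⇑f) (n*M) ε := by
    intro n hn
    have key : ∀ w : Fin n → Bool, ∃ z : X,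
        ∀ j : Fin n, dist ((⇑f)^[(j:ℕ)*M] z) (cond (w j) a b) < ε := by
      intro w
      set C : ℕ → X × ℕ := fun j => (if h : j < n then cond (w ⟨j,h⟩) a b else a, 1) with hC
      obtain ⟨z, hz⟩ := hspecM n hn C (fun j _ => by simp [hC]) (fun _ => M)
        (fun _ _ => le_refl M)
      refine ⟨z, fun j => ?_⟩
      have hst : sTimes C (fun _ => M) (j:ℕ) = (j:ℕ)*M :=
        sTimes_const C (fun _ => M) M (fun _ => rfl) (fun _ => rfl) _
      have := hz (j:ℕ) j.2 0 (by simp [hC])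
      rw [hst] at this
      simpa [hC, j.2] using this
    choose Z hZ using key
    have hsep2 : ∀ w w' : Fin n → Bool, w ≠ w' → ∃ j : Fin n,
        2*ε < dist ((⇑f)^[(j:ℕ)*M] (Z w)) ((⇑f)^[(j:ℕ)*M] (Z w')) := by
      intro w w' hww
      obtain ⟨j, hj⟩ := Function.ne_iff.mp hww
      refine ⟨j, ?_⟩
      have h1 := hZ w j
      have h2 := hZ w' j
      have hd : dist (cond (w j) a b) (cond (w' j) a b) = dist a b := by
        cases hwj : w j <;> cases hwj' : w' j <;> simp_all [dist_comm]
      have htri := dist_triangle4 (cond (w j) a b) ((⇑f)^[(j:ℕ)*M] (Z w))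
        ((⇑f)^[(j:ℕ)*M] (Z w')) (cond (w' j) a b)
      rw [hd] at htri
      have hab4 : dist a b = 4 * ε := by rw [hε_def]; ring
      linarith [dist_comm (cond (w j) a b) ((⇑f)^[(j:ℕ)*M] (Z w)),
        dist_comm ((⇑f)^[(j:ℕ)*M] (Z w')) (cond (w' j) a b)]
    have hZinj : Function.Injective Z := by
      intro w w' h
      by_contra hne
      obtain ⟨j, hj⟩ := hsep2 w w' hne
      rw [h] at hj
      simp at hj
      linarith
    set E : Finset X := Finset.image Z Finset.univ with hEdef
    have hcard : E.card = 2^n := by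
      rw [hEdef, Finset.card_image_of_injective _ hZinj, Finset.card_univ]
      simp
    have hE : IsSepSet (⇑f) (n*M) ε ↑E := by
      intro x hx y hy hxy
      rw [hEdef, Finset.coe_image] at hx hy
      obtain ⟨w, -, rfl⟩ := hx
      obtain ⟨w', -, rfl⟩ := hy
      have hww : w ≠ w' := fun h => hxy (by rw [h])
      obtain ⟨j, hj⟩ := hsep2 w w' hww
      exact ⟨(j:ℕ)*M, (by have := j.2; nlinarith), by linarith⟩
    calc (2:ℕ)^n = E.card := hcard.symm
      _ ≤ sepNum (⇑f) (n*M) ε := le_csSup (sep_bdd (⇑f) (n*M) hε) ⟨E, hE, rfl⟩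
  set c : ℝ := Real.log 2 / M with hcdef
  have hc : 0 < c := div_pos (Real.log_pos one_lt_two) (by exact_mod_cast hM)
  have hfreq : ∃ᶠ m in atTop,
      (c:EReal) ≤ ((Real.log (sepNum (⇑f) m ε) / m : ℝ) : EReal) := by
    rw [Filter.frequently_atTop]
    intro N
    set n : ℕ := max N 1 with hndef
    have hn : 0 < n := lt_of_lt_of_le one_pos (le_max_right _ _)
    refine ⟨n * M, ?_, ?_⟩
    · calc N ≤ n := le_max_left _ _
        _ = n * 1 := (mul_one n).symm
        _ ≤ n * M := Nat.mul_le_mul_left n hM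
    · have h2 := hsepnum n hn
      have hlog : (n:ℝ) * Real.log 2 ≤ Real.log (sepNum (⇑f) (n*M) ε) := by
        have := Real.log_le_log (by positivity : (0:ℝ) < (2:ℝ)^n)
          (by exact_mod_cast h2 : ((2:ℝ)^n : ℝ) ≤ (sepNum (⇑f) (n*M) ε : ℝ))
        rwa [Real.log_pow] at this
      have hnM : (0:ℝ) < ((n*M : ℕ) : ℝ) := by
        exact_mod_cast Nat.mul_pos hn hM
      have hle : c ≤ Real.log (sepNum (⇑f) (n*M) ε) / ((n*M : ℕ) : ℝ) := by
        rw [le_div_iff₀ hnM]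
        have heq : c * ((n*M : ℕ) : ℝ) = (n:ℝ) * Real.log 2 := by
          push_cast
          rw [hcdef]
          field_simp
        rw [heq]
        exact hlog
      exact_mod_cast EReal.coe_le_coe_iff.mpr hle
  have hlim : (c:EReal) ≤
      Filter.limsup (fun m : ℕ => ((Real.log (sepNum (⇑f) m ε) / m : ℝ) : EReal)) Filter.atTop :=
    Filter.le_limsup_of_frequently_le' hfreq
  have htop : Filter.limsup (fun m : ℕ => ((Real.log (sepNum (⇑f) m ε) / m : ℝ) : EReal))
      Filter.atTop ≤ topEnt (⇑f) := by
    apply le_iSup₂ (f := fun (e : ℝ) (_ : 0 < e) =>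
      Filter.limsup (fun m : ℕ => ((Real.log (sepNum (⇑f) m e) / m : ℝ) : EReal)) Filter.atTop)
      ε hε
  calc (0:EReal) < (c:EReal) := by exact_mod_cast hc
    _ ≤ _ := hlim
    _ ≤ topEnt (⇑f) := htop

end Paper
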